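/- Let $P$ be the uniform Cantor distribution with ratio $r\in(0,1/2)$, and define $V_n(P)=\inf\{\int\min_{a\in\alpha}(x-a)^2dP:\,\mathrm{card}(\alpha)\le n\}$. Then for all $n\ge1$ and $1\le j\le n$, $V_n(P)\le\tfrac12 r^2\big(V_j(P)+V_{n-j}(P)\big)$ whenever $j,n-j\ge1$, provided the sets $S_1(\alpha_j)$ and $S_2(\alpha_{n-j})$ built from near-optimal sets $\alpha_j,\alpha_{n-j}\subset[0,1]$ are used as candidates. -/

import Mathlib

open MeasureTheory
open scoped ENNReal

noncomputable def Smap (r : ℝ) (i : Fin 2) : ℝ → ℝ :=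
  fun x => if i = 0 then r * x else r * x + (1 - r)

noncomputable def Sword (r : ℝ) (σ : List (Fin 2)) : ℝ → ℝ :=
  σ.foldr (fun i g => Smap r i ∘ g) id

noncomputable def quantErr (P : Measure ℝ) (n : ℕ) : ℝ :=
  sInf {e : ℝ | ∃ α : Finset ℝ, α.Nonempty ∧ α.card ≤ n ∧
    e = ∫ x, sInf ((fun a => (x - a)^2) '' (α : Set ℝ)) ∂P}

noncomputable def fE (γ : Finset ℝ) (x : ℝ) : ℝ :=
  sInf ((fun a => (x - a)^2) '' (γ : Set ℝ))

lemma Smap_cont (r : ℝ) (i : Fin 2) : Continuous (Smap r i) := by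
  unfold Smap; by_cases h : i = 0 <;> simp only [h, if_true, if_false] <;> fun_prop

lemma Smap_sub (r : ℝ) (i : Fin 2) (y b : ℝ) :
    Smap r i y - Smap r i b = r * (y - b) := by
  unfold Smap; by_cases h : i = 0 <;> simp only [h, if_true, if_false] <;> ring

lemma Smap_abs_le (r : ℝ) (hr1 : 0 < r) (hr2 : r < 1/2) (i : Fin 2) (x : ℝ) :
    |Smap r i x| ≤ r * |x| + 1 := by
  unfold Smap; by_cases h : i = 0 <;> simp only [h, if_true, if_false]
  · calc |r * x| = r * |x| := by rw [abs_mul, abs_of_pos hr1]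
      _ ≤ r * |x| + 1 := by linarith
  · calc |r * x + (1 - r)| ≤ |r * x| + |1 - r| := abs_add_le _ _
      _ = r * |x| + (1 - r) := by rw [abs_of_nonneg (show (0:ℝ) ≤ 1 - r by linarith), abs_mul, abs_of_pos hr1]
      _ ≤ r * |x| + 1 := by linarith

lemma fE_bddset (γ : Finset ℝ) (x : ℝ) :
    BddBelow ((fun a => (x - a)^2) '' (γ : Set ℝ)) := by
  refine ⟨0, ?_⟩; rintro y ⟨b, -, rfl⟩; positivity

lemma fE_eq (γ : Finset ℝ) (hγ : γ.Nonempty) (x : ℝ) :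
    fE γ x = γ.inf' hγ (fun a => (x - a)^2) :=
  (Finset.inf'_eq_csInf_image γ hγ _).symm

lemma fE_cont (γ : Finset ℝ) (hγ : γ.Nonempty) : Continuous (fE γ) := by
  have h : fE γ = fun x => γ.inf' hγ (fun a => (x - a)^2) := funext (fE_eq γ hγ)
  rw [h]
  exact Continuous.finset_inf'_apply hγ (fun i _ => by continuity)

lemma fE_nonneg (γ : Finset ℝ) (x : ℝ) : 0 ≤ fE γ x := by
  apply Real.sInf_nonneg
  rintro y ⟨a, -, rfl⟩; positivity

lemma fE_le (γ : Finset ℝ) {a : ℝ} (ha : a ∈ γ) (x : ℝ) : fE γ x ≤ (x - a)^2 :=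
  csInf_le (fE_bddset γ x) ⟨a, ha, rfl⟩

lemma fE_comp_le {r : ℝ} (hr : 0 < r) (i : Fin 2) (δ γ : Finset ℝ) (hδ : δ.Nonempty)
    (hsub : ∀ a ∈ δ, Smap r i a ∈ γ) (y : ℝ) :
    fE γ (Smap r i y) ≤ r^2 * fE δ y := by
  rw [fE_eq δ hδ]
  rw [← div_le_iff₀' (by positivity : (0:ℝ) < r^2)]
  apply Finset.le_inf'
  intro b hb
  rw [div_le_iff₀' (by positivity : (0:ℝ) < r^2)]
  calc fE γ (Smap r i y) ≤ (Smap r i y - Smap r i b)^2 := fE_le γ (hsub b hb) _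
    _ = r^2 * (y - b)^2 := by rw [Smap_sub]; ring

lemma tail_zero (r : ℝ) (hr1 : 0 < r) (hr2 : r < 1/2)
    (P : Measure ℝ) [IsProbabilityMeasure P]
    (hP : P = (2 : ℝ≥0∞)⁻¹ • P.map (Smap r 0) + (2 : ℝ≥0∞)⁻¹ • P.map (Smap r 1)) :
    P {x : ℝ | 3 < |x|} = 0 := by
  set A : ℝ → Set ℝ := fun M => {x | M < |x|} with hA
  have hAmeas : ∀ M, MeasurableSet (A M) := by
    intro M
    exact measurableSet_lt measurable_const (continuous_abs.measurable)
  have hAmono : ∀ {M M' : ℝ}, M ≤ M' → A M' ⊆ A M := by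
    intro M M' h x hx
    exact lt_of_le_of_lt h hx
  have hsplit : ∀ s : Set ℝ, MeasurableSet s →
      P s = 2⁻¹ * P (Smap r 0 ⁻¹' s) + 2⁻¹ * P (Smap r 1 ⁻¹' s) := by
    intro s hs
    conv_lhs => rw [hP]
    simp [Measure.map_apply (Smap_cont r 0).measurable hs,
      Measure.map_apply (Smap_cont r 1).measurable hs]
  have hpre : ∀ (i : Fin 2) (M : ℝ), Smap r i ⁻¹' (A M) ⊆ A ((M - 1)/r) := by
    intro i M x hx
    have h1 : M < |Smap r i x| := hx
    have h2 : |Smap r i x| ≤ r * |x| + 1 := Smap_abs_le r hr1 hr2 i x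
    have h3 : M - 1 < r * |x| := by linarith
    exact (div_lt_iff₀' hr1).mpr h3
  have hstep : ∀ M : ℝ, P (A M) ≤ P (A ((M - 1)/r)) := by
    intro M
    rw [hsplit (A M) (hAmeas M)]
    have h0 := measure_mono (μ := P) (hpre 0 M)
    have h1 := measure_mono (μ := P) (hpre 1 M)
    calc 2⁻¹ * P (Smap r 0 ⁻¹' A M) + 2⁻¹ * P (Smap r 1 ⁻¹' A M)
        ≤ 2⁻¹ * P (A ((M-1)/r)) + 2⁻¹ * P (A ((M-1)/r)) := by
          gcongr
      _ = P (A ((M-1)/r)) := by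
          rw [← add_mul, ENNReal.inv_two_add_inv_two, one_mul]
  have hstep2 : ∀ M : ℝ, 3 ≤ M → P (A M) ≤ P (A (M + 1)) := by
    intro M hM
    refine (hstep M).trans (measure_mono (hAmono ?_))
    have h2 : 2 < 1/r := by
      rw [lt_div_iff₀ hr1]; linarith
    have : 2 * (M - 1) ≤ (M - 1) / r := by
      rw [div_eq_mul_inv, ← one_div]
      have : 0 < M - 1 := by linarith
      nlinarith
    linarith
  have hiter : ∀ k : ℕ, P (A 3) ≤ P (A (3 + k)) := by
    intro k
    induction k with
    | zero => simp
    | succ m ih =>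
      refine ih.trans ((hstep2 (3 + m) (by have : (0:ℝ) ≤ m := Nat.cast_nonneg m; linarith)).trans (measure_mono (hAmono ?_)))
      push_cast; linarith
  have hempty : ⋂ k : ℕ, A (3 + k) = ∅ := by
    ext x
    simp only [Set.mem_iInter, Set.mem_empty_iff_false, iff_false]
    intro hall
    obtain ⟨k, hk⟩ := exists_nat_ge (|x|)
    have := hall k
    simp only [hA, Set.mem_setOf_eq] at this
    linarith
  have htend : Filter.Tendsto (fun k : ℕ => P (A (3 + k))) Filter.atTop (nhds 0) := by
    have := tendsto_measure_iInter_atTop (μ := P) (s := fun k : ℕ => A (3 + k))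
      (fun k => (hAmeas _).nullMeasurableSet)
      (fun k k' hk => hAmono (by push_cast; exact_mod_cast by exact_mod_cast add_le_add_right (Nat.cast_le.mpr hk) 3))
      ⟨0, measure_ne_top P _⟩
    rwa [hempty, measure_empty] at this
  have := ge_of_tendsto' htend (fun k => hiter k)
  exact le_antisymm this (zero_le)

theorem stmt16 (r : ℝ) (hr1 : 0 < r) (hr2 : r < 1/2)
    (P : Measure ℝ) [IsProbabilityMeasure P]
    (hP : P = (2 : ℝ≥0∞)⁻¹ • P.map (Smap r 0) + (2 : ℝ≥0∞)⁻¹ • P.map (Smap r 1))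
    (n j : ℕ) (hn : 1 ≤ n) (hj1 : 1 ≤ j) (hj2 : j ≤ n - 1) :
    quantErr P n ≤ (1/2) * r^2 * (quantErr P j + quantErr P (n - j)) := by
  have hnj : 1 ≤ n - j := by omega
  have hae : ∀ᵐ x ∂P, |x| ≤ 3 := by
    have h := tail_zero r hr1 hr2 P hP
    rw [ae_iff]
    convert h using 2
    ext x; simp [not_le]
  have hbound : ∀ γ : Finset ℝ, γ.Nonempty → ∃ C : ℝ, ∀ y : ℝ, |y| ≤ 3 → ‖fE γ y‖ ≤ C := by
    rintro γ ⟨a₀, ha₀⟩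
    refine ⟨(3 + |a₀|)^2, fun y hy => ?_⟩
    rw [Real.norm_eq_abs, abs_of_nonneg (fE_nonneg γ y)]
    calc fE γ y ≤ (y - a₀)^2 := fE_le γ ha₀ y
      _ ≤ (3 + |a₀|)^2 := by nlinarith [abs_nonneg a₀, le_abs_self a₀, neg_abs_le a₀,
          (abs_le.mp hy).1, (abs_le.mp hy).2]
  have hinteg : ∀ γ : Finset ℝ, γ.Nonempty → Integrable (fE γ) P := by
    intro γ hγ
    obtain ⟨C, hC⟩ := hbound γ hγ
    exact Integrable.mono' (integrable_const C) (fE_cont γ hγ).aestronglyMeasurable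
      (hae.mono fun x hx => hC x hx)
  have hS3 : ∀ (i : Fin 2) (x : ℝ), |x| ≤ 3 → |Smap r i x| ≤ 3 := by
    intro i x hx
    have h := Smap_abs_le r hr1 hr2 i x
    nlinarith [abs_nonneg x]
  have hintegS : ∀ (i : Fin 2) (γ : Finset ℝ), γ.Nonempty →
      Integrable (fun x => fE γ (Smap r i x)) P := by
    intro i γ hγ
    obtain ⟨C, hC⟩ := hbound γ hγ
    exact Integrable.mono' (integrable_const C)
      ((fE_cont γ hγ).comp (Smap_cont r i)).aestronglyMeasurable
      (hae.mono fun x hx => hC _ (hS3 i x hx))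
  have hQ : ∀ m : ℕ, quantErr P m = sInf {e : ℝ | ∃ α : Finset ℝ, α.Nonempty ∧ α.card ≤ m ∧
      e = ∫ x, fE α x ∂P} := fun m => rfl
  have hbddQ : ∀ m : ℕ, BddBelow {e : ℝ | ∃ α : Finset ℝ, α.Nonempty ∧ α.card ≤ m ∧
      e = ∫ x, fE α x ∂P} := by
    intro m
    refine ⟨0, ?_⟩
    rintro e ⟨α, hα, hc, rfl⟩
    exact integral_nonneg fun x => fE_nonneg α x
  have hneQ : ∀ m : ℕ, 1 ≤ m → Set.Nonempty {e : ℝ | ∃ α : Finset ℝ, α.Nonempty ∧ α.card ≤ m ∧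
      e = ∫ x, fE α x ∂P} := by
    intro m hm
    exact ⟨_, ({0} : Finset ℝ), ⟨0, Finset.mem_singleton_self 0⟩, by simpa using hm, rfl⟩
  apply le_of_forall_pos_le_add
  intro ε hε
  have h01 : (0:ℝ) < r^2 + 1 := by positivity
  set δ := ε / (r^2 + 1) with hδ
  have hδpos : 0 < δ := by positivity
  obtain ⟨eα, heαmem, heα⟩ := Real.lt_sInf_add_pos (hneQ j hj1) hδpos
  obtain ⟨α, hαne, hαcard, rfl⟩ := heαmem
  obtain ⟨eβ, heβmem, heβ⟩ := Real.lt_sInf_add_pos (hneQ (n - j) hnj) hδpos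
  obtain ⟨β, hβne, hβcard, rfl⟩ := heβmem
  rw [← hQ j] at heα
  rw [← hQ (n - j)] at heβ
  set γ : Finset ℝ := α.image (Smap r 0) ∪ β.image (Smap r 1) with hγdef
  have hγne : γ.Nonempty := by
    obtain ⟨a, ha⟩ := hαne
    exact ⟨Smap r 0 a, Finset.mem_union_left _ (Finset.mem_image_of_mem _ ha)⟩
  have hγcard : γ.card ≤ n := by
    calc γ.card ≤ (α.image (Smap r 0)).card + (β.image (Smap r 1)).card :=
          Finset.card_union_le _ _
      _ ≤ j + (n - j) := add_le_add (le_trans (Finset.card_image_le) hαcard)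
          (le_trans (Finset.card_image_le) hβcard)
      _ ≤ n := by omega
  have h1 : quantErr P n ≤ ∫ x, fE γ x ∂P := by
    rw [hQ n]
    exact csInf_le (hbddQ n) ⟨γ, hγne, hγcard, rfl⟩
  have hμint : ∀ i : Fin 2, Integrable (fE γ) ((2:ℝ≥0∞)⁻¹ • P.map (Smap r i)) := by
    intro i
    refine Integrable.smul_measure ?_ (by simp)
    exact (integrable_map_measure (fE_cont γ hγne).aestronglyMeasurable
      (Smap_cont r i).measurable.aemeasurable).2 (hintegS i γ hγne)
  have hsplitInt : ∫ x, fE γ x ∂P =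
      (1/2) * ∫ x, fE γ (Smap r 0 x) ∂P + (1/2) * ∫ x, fE γ (Smap r 1 x) ∂P := by
    conv_lhs => rw [hP]
    rw [integral_add_measure (hμint 0) (hμint 1), integral_smul_measure, integral_smul_measure,
      integral_map (Smap_cont r 0).measurable.aemeasurable (fE_cont γ hγne).aestronglyMeasurable,
      integral_map (Smap_cont r 1).measurable.aemeasurable (fE_cont γ hγne).aestronglyMeasurable]
    norm_num [ENNReal.toReal_inv, smul_eq_mul]
  have hsubα : ∀ a ∈ α, Smap r 0 a ∈ γ := fun a ha =>
    Finset.mem_union_left _ (Finset.mem_image_of_mem _ ha)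
  have hsubβ : ∀ a ∈ β, Smap r 1 a ∈ γ := fun a ha =>
    Finset.mem_union_right _ (Finset.mem_image_of_mem _ ha)
  have hle0 : ∫ x, fE γ (Smap r 0 x) ∂P ≤ r^2 * ∫ x, fE α x ∂P := by
    rw [← integral_const_mul]
    exact integral_mono (hintegS 0 γ hγne) ((hinteg α hαne).const_mul (r^2))
      (fun x => fE_comp_le hr1 0 α γ hαne hsubα x)
  have hle1 : ∫ x, fE γ (Smap r 1 x) ∂P ≤ r^2 * ∫ x, fE β x ∂P := by
    rw [← integral_const_mul]
    exact integral_mono (hintegS 1 γ hγne) ((hinteg β hβne).const_mul (r^2))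
      (fun x => fE_comp_le hr1 1 β γ hβne hsubβ x)
  have hr2nn : (0:ℝ) ≤ r^2 := by positivity
  have key : r^2 * δ ≤ ε := by
    rw [hδ, mul_comm, div_mul_eq_mul_div, div_le_iff₀ h01]
    nlinarith
  calc quantErr P n ≤ ∫ x, fE γ x ∂P := h1
    _ = (1/2) * ∫ x, fE γ (Smap r 0 x) ∂P + (1/2) * ∫ x, fE γ (Smap r 1 x) ∂P := hsplitInt
    _ ≤ (1/2) * (r^2 * ∫ x, fE α x ∂P) + (1/2) * (r^2 * ∫ x, fE β x ∂P) := by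
        gcongr (1/2) * ?_ + (1/2) * ?_
    _ ≤ (1/2) * (r^2 * (quantErr P j + δ)) + (1/2) * (r^2 * (quantErr P (n - j) + δ)) := by
        gcongr
    _ = (1/2) * r^2 * (quantErr P j + quantErr P (n - j)) + r^2 * δ := by ring
    _ ≤ (1/2) * r^2 * (quantErr P j + quantErr P (n - j)) + ε := by linarith
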